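/- Let n be a positive integer and let f : ℝ^n → ℝ^n be a topical function. Then all super-eigenspaces S^λ(f), λ ∈ ℝ, are bounded in the Hilbert semi-norm if and only if f is indecomposable. -/

import Mathlib

/-- `⊤(x) = max_i x_i`. -/
noncomputable def topV {n : ℕ} (x : Fin n → ℝ) : ℝ := ⨆ i, x i

/-- `⊥(x) = min_i x_i`. -/
noncomputable def botV {n : ℕ} (x : Fin n → ℝ) : ℝ := ⨅ i, x i

/-- The characteristic vector `e_J` of a set `J` of indices. -/
noncomputable def eVec {n : ℕ} (J : Set (Fin n)) : Fin n → ℝ :=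
  J.indicator fun _ => 1

/-- `f` is decomposable: there is a non-trivial partition `I ∪ J = {1,…,n}`
(here `I = Jᶜ`) with `u ↦ f_i(u·e_J)` bounded above for each `i ∈ I`. -/
def Decomposable {n : ℕ} (f : (Fin n → ℝ) → (Fin n → ℝ)) : Prop :=
  ∃ J : Set (Fin n), J.Nonempty ∧ Jᶜ.Nonempty ∧
    ∀ i ∈ Jᶜ, ∃ M : ℝ, ∀ u : ℝ, f (u • eVec J) i ≤ M

/-- Subsequence extraction: there is an infinite set `A ⊆ ℕ` along which every
coordinate of `z` is either bounded above or tends to infinity. -/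
lemma extract_aux (n : ℕ) (z : ℕ → Fin n → ℝ) (s : Finset (Fin n)) :
    ∃ A : Set ℕ, A.Infinite ∧ ∀ i ∈ s,
      (∃ C : ℝ, ∀ m ∈ A, z m i ≤ C) ∨
      (∀ u : ℝ, ∃ m₀ : ℕ, ∀ m ∈ A, m₀ ≤ m → u ≤ z m i) := by
  classical
  induction s using Finset.induction_on with
  | empty => exact ⟨Set.univ, Set.infinite_univ, by simp⟩
  | @insert a s ha ih =>
    obtain ⟨A, hA, hprop⟩ := ih
    by_cases h : ∃ C : ℝ, {m | m ∈ A ∧ z m a ≤ C}.Infinite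
    · obtain ⟨C, hC⟩ := h
      refine ⟨{m | m ∈ A ∧ z m a ≤ C}, hC, fun i hi => ?_⟩
      rcases Finset.mem_insert.mp hi with rfl | hi
      · exact Or.inl ⟨C, fun m hm => hm.2⟩
      · rcases hprop i hi with ⟨C', hC'⟩ | h2
        · exact Or.inl ⟨C', fun m hm => hC' m hm.1⟩
        · exact Or.inr fun u => (h2 u).imp fun m₀ hm₀ m hm hle => hm₀ m hm.1 hle
    · push_neg at h
      refine ⟨A, hA, fun i hi => ?_⟩
      rcases Finset.mem_insert.mp hi with rfl | hi
      · refine Or.inr fun u => ?_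
        have hf : {m | m ∈ A ∧ z m i ≤ u}.Finite := h u
        obtain ⟨b, hb⟩ := hf.bddAbove
        refine ⟨b + 1, fun m hm hle => ?_⟩
        by_contra hc
        push_neg at hc
        have : m ≤ b := hb ⟨hm, hc.le⟩
        omega
      · exact hprop i hi

theorem super_eigenspaces_bounded_iff_indecomposable_additive
    (n : ℕ) (hn : 0 < n) (f : (Fin n → ℝ) → (Fin n → ℝ))
    (htop : ∀ (x : Fin n → ℝ) (h : ℝ), f (fun i => x i + h) = fun i => f x i + h)
    (hmono : Monotone f) :
    (∀ lam : ℝ, ∃ M : ℝ,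
      ∀ x : Fin n → ℝ, (∀ i, f x i ≤ x i + lam) → topV x - botV x ≤ M) ↔
      ¬ Decomposable f := by
  classical
  haveI : Nonempty (Fin n) := ⟨⟨0, hn⟩⟩
  constructor
  · rintro Hb ⟨J, hJ, hJc, hdec⟩
    choose! M hM using hdec
    set lam : ℝ := Finset.univ.sup' Finset.univ_nonempty
      (fun k => max (f (fun _ => 0) k) (M k)) with hlamdef
    have hlam0 : ∀ k, max (f (fun _ => 0) k) (M k) ≤ lam := fun k =>
      Finset.le_sup' (fun k => max (f (fun _ => 0) k) (M k)) (Finset.mem_univ k)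
    have hlam1 : ∀ k, f (fun _ => 0) k ≤ lam := fun k =>
      le_trans (le_max_left _ _) (hlam0 k)
    have hlam2 : ∀ k, M k ≤ lam := fun k =>
      le_trans (le_max_right _ _) (hlam0 k)
    obtain ⟨Mb, hMb⟩ := Hb lam
    set u : ℝ := max Mb 0 + 1 with hudef
    have hu0 : (0:ℝ) ≤ u := by
      have := le_max_right Mb 0; simp only [hudef]; linarith
    have hkey : ∀ k, f (u • eVec J) k ≤ (u • eVec J) k + lam := by
      intro k
      by_cases hk : k ∈ J
      · have h1 : (u • eVec J) ≤ fun i => (fun _ => (0:ℝ)) i + u := by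
          intro i
          simp only [Pi.smul_apply, smul_eq_mul, eVec]
          by_cases hiJ : i ∈ J
          · rw [Set.indicator_of_mem hiJ]; simp
          · rw [Set.indicator_of_notMem hiJ]; simpa using hu0
        have h2 : f (u • eVec J) k ≤ f (fun _ => (0:ℝ)) k + u := by
          calc f (u • eVec J) k ≤ f (fun i => (fun _ => (0:ℝ)) i + u) k := hmono h1 k
            _ = f (fun _ => (0:ℝ)) k + u := by rw [htop]
        have h3 : (u • eVec J) k = u := by
          simp [eVec, Set.indicator_of_mem hk]
        rw [h3]
        have := hlam1 k
        linarith
      · have h3 : (u • eVec J) k = 0 := by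
          simp [eVec, Set.indicator_of_notMem hk]
        rw [h3]
        have := hlam2 k
        linarith [hM k hk u]
    have hb := hMb (u • eVec J) hkey
    obtain ⟨j, hj⟩ := hJ
    obtain ⟨i, hi⟩ := hJc
    have h1 : u ≤ topV (u • eVec J) := by
      have he : (u • eVec J) j = u := by simp [eVec, Set.indicator_of_mem hj]
      calc u = (u • eVec J) j := he.symm
        _ ≤ topV (u • eVec J) := le_ciSup (Set.finite_range _).bddAbove j
    have h2 : botV (u • eVec J) ≤ 0 := by
      have he : (u • eVec J) i = 0 := by simp [eVec, Set.indicator_of_notMem hi]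
      calc botV (u • eVec J) ≤ (u • eVec J) i := ciInf_le (Set.finite_range _).bddBelow i
        _ = 0 := he
    have := le_max_left Mb 0
    simp only [hudef] at h1
    linarith
  · intro hnd
    by_contra hb
    push_neg at hb
    obtain ⟨lam, hlam⟩ := hb
    choose x hx1 hx2 using fun m : ℕ => hlam (m : ℝ)
    set z : ℕ → Fin n → ℝ := fun m i => x m i - botV (x m) with hzdef
    have hz0 : ∀ m i, 0 ≤ z m i := by
      intro m i
      have h1 : botV (x m) ≤ x m i := ciInf_le (Set.finite_range _).bddBelow i
      have h2 : z m i = x m i - botV (x m) := rfl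
      linarith
    have hzf : ∀ m i, f (z m) i ≤ z m i + lam := by
      intro m i
      have he : f (z m) = fun i => f (x m) i + (-(botV (x m))) := by
        have h := htop (x m) (-(botV (x m)))
        simp only [hzdef, sub_eq_add_neg]
        exact h
      have h3 : f (z m) i = f (x m) i + (-(botV (x m))) := by rw [he]
      have h1 := hx1 m i
      have h2 : z m i = x m i - botV (x m) := rfl
      linarith
    obtain ⟨A, hAinf, hprop⟩ := extract_aux n z Finset.univ
    set J : Set (Fin n) := {i | ¬ ∃ C : ℝ, ∀ m ∈ A, z m i ≤ C} with hJdef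
    have hgrow : ∀ j ∈ J, ∀ u : ℝ, ∃ m₀ : ℕ, ∀ m ∈ A, m₀ ≤ m → u ≤ z m j := by
      intro j hj u
      exact ((hprop j (Finset.mem_univ j)).resolve_left hj) u
    have hbddc : ∀ i ∈ Jᶜ, ∃ C : ℝ, ∀ m ∈ A, z m i ≤ C := by
      intro i hi
      have h : ¬ i ∈ J := hi
      simp only [hJdef, Set.mem_setOf_eq, not_not] at h
      exact h
    have hmax : ∀ m : ℕ, ∃ j, (m : ℝ) < z m j := by
      intro m
      obtain ⟨j, hj⟩ := Finite.exists_max (x m)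
      refine ⟨j, ?_⟩
      have h1 : topV (x m) ≤ x m j := ciSup_le hj
      have h3 := hx2 m
      have h2 : z m j = x m j - botV (x m) := rfl
      linarith
    have hmin : ∀ m : ℕ, ∃ j, z m j ≤ 0 := by
      intro m
      obtain ⟨j, hj⟩ := Finite.exists_min (x m)
      refine ⟨j, ?_⟩
      have h1 : x m j ≤ botV (x m) := le_ciInf hj
      have h2 : z m j = x m j - botV (x m) := rfl
      linarith
    have hJne : J.Nonempty := by
      by_contra hne
      have hall : ∀ j : Fin n, ∃ C : ℝ, ∀ m ∈ A, z m j ≤ C := by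
        intro j
        by_contra hc
        exact hne ⟨j, hc⟩
      choose C hC using hall
      set Cm := Finset.univ.sup' Finset.univ_nonempty C with hCm
      obtain ⟨m, hmA, hmlt⟩ := hAinf.exists_gt ⌈Cm⌉₊
      obtain ⟨j, hj⟩ := hmax m
      have h1 : z m j ≤ C j := hC j m hmA
      have h2 : C j ≤ Cm := Finset.le_sup' C (Finset.mem_univ j)
      have h3 : Cm ≤ (⌈Cm⌉₊ : ℝ) := Nat.le_ceil Cm
      have h4 : ((⌈Cm⌉₊ : ℕ) : ℝ) ≤ (m : ℝ) := by exact_mod_cast hmlt.le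
      linarith
    have hJcne : Jᶜ.Nonempty := by
      by_contra hne
      have hall : ∀ j : Fin n, ∃ m₀ : ℕ, ∀ m ∈ A, m₀ ≤ m → 1 ≤ z m j := by
        intro j
        refine hgrow j ?_ 1
        by_contra hj
        exact hne ⟨j, hj⟩
      choose m₀ hm₀ using hall
      set B := Finset.univ.sup m₀ with hB
      obtain ⟨m, hmA, hmlt⟩ := hAinf.exists_gt B
      obtain ⟨j, hj⟩ := hmin m
      have := hm₀ j m hmA
        (le_of_lt (lt_of_le_of_lt (Finset.le_sup (Finset.mem_univ j)) hmlt))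
      linarith
    refine hnd ⟨J, hJne, hJcne, ?_⟩
    intro i hi
    obtain ⟨C, hC⟩ := hbddc i hi
    refine ⟨C + lam, fun u => ?_⟩
    have hall : ∀ j : Fin n, ∃ m₀ : ℕ, ∀ m ∈ A, m₀ ≤ m → (j ∈ J → max u 0 ≤ z m j) := by
      intro j
      by_cases hj : j ∈ J
      · obtain ⟨m₀, hm₀⟩ := hgrow j hj (max u 0)
        exact ⟨m₀, fun m hm hle _ => hm₀ m hm hle⟩
      · exact ⟨0, fun m hm hle hjj => absurd hjj hj⟩
    choose m₀ hm₀ using hall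
    set B := Finset.univ.sup m₀ with hB
    obtain ⟨m, hmA, hmlt⟩ := hAinf.exists_gt B
    have hle : (u • eVec J) ≤ z m := by
      intro k
      by_cases hk : k ∈ J
      · have h1 : (u • eVec J) k = u := by simp [eVec, Set.indicator_of_mem hk]
        have h2 := hm₀ k m hmA
          (le_of_lt (lt_of_le_of_lt (Finset.le_sup (Finset.mem_univ k)) hmlt)) hk
        rw [h1]
        exact le_trans (le_max_left u 0) h2
      · have h1 : (u • eVec J) k = 0 := by simp [eVec, Set.indicator_of_notMem hk]
        rw [h1]
        exact hz0 m k
    calc f (u • eVec J) i ≤ f (z m) i := hmono hle i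
      _ ≤ z m i + lam := hzf m i
      _ ≤ C + lam := by linarith [hC m hmA]
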